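/- Let M be an m × n matrix with nonnegative real entries, let κ ≥ 1, and suppose (L, R) with L an m × κ matrix and R a κ × n matrix, both with strictly positive entries, is a local minimizer of the function (L, R) ↦ gKL(M ‖ L R) over pairs of strictly positive matrices. Then the product LR has the same row sums and the same column sums as M: ∑_j (LR)_{ij} = ∑_j M_{ij} for every i, and ∑_i (LR)_{ij} = ∑_i M_{ij} for every j. (In particular, low-rank approximation under gKL preserves row and column sums at any positive local optimum.) -/

import Mathlib

open Finset

/-- Real-valued generalized KL divergence, for entrywise positive second
argument, with the convention `0 · log 0 = 0`:
`gKLR M A = ∑ᵢⱼ ( Mᵢⱼ·log(Mᵢⱼ/Aᵢⱼ) − Mᵢⱼ + Aᵢⱼ )`. -/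
noncomputable def gKLR {ι κ : Type*} [Fintype ι] [Fintype κ]
    (M A : ι → κ → ℝ) : ℝ :=
  ∑ i, ∑ j,
    ((if M i j = 0 then 0 else M i j * Real.log (M i j / A i j)) - M i j + A i j)

lemma hasDerivAt_term (c a : ℝ) (ha : 0 < a) :
    HasDerivAt (fun t : ℝ =>
      (if c = 0 then 0 else c * Real.log (c / (t * a))) - c + t * a) (a - c) 1 := by
  by_cases hc : c = 0
  · have h1 : HasDerivAt (fun t : ℝ => (0:ℝ) - 0 + t * a) a 1 := by
      simpa using (HasDerivAt.const_add ((0:ℝ) - 0) (hasDerivAt_mul_const a))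
    have h2 : (fun t : ℝ =>
        (if c = 0 then 0 else c * Real.log (c / (t * a))) - c + t * a)
        = fun t : ℝ => (0:ℝ) - 0 + t * a := by
      funext t; simp [hc]
    rw [h2, hc, sub_zero]
    simpa using h1
  · have h1 : HasDerivAt (fun t : ℝ =>
        c * (Real.log c - Real.log t - Real.log a) - c + t * a) (a - c) 1 := by
      have hlog : HasDerivAt (fun t : ℝ => Real.log c - Real.log t - Real.log a)
          (-(1:ℝ)⁻¹) 1 :=
        ((Real.hasDerivAt_log one_ne_zero).const_sub (Real.log c)).sub_const (Real.log a)
      have := ((hlog.const_mul c).sub_const c).fun_add (hasDerivAt_mul_const a)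
      exact this.congr_deriv (by ring)
    apply h1.congr_of_eventuallyEq
    filter_upwards [eventually_ne_nhds one_ne_zero] with t ht
    rw [if_neg hc, Real.log_div hc (mul_ne_zero ht ha.ne'), Real.log_mul ht ha.ne']
    ring

lemma key_sums {α : Type*} [Fintype α] (c a : α → ℝ) (ha : ∀ j, 0 < a j) (C : ℝ)
    (g : ℝ → ℝ)
    (hg : ∀ t, g t = C + ∑ j, ((if c j = 0 then 0 else
        c j * Real.log (c j / (t * a j))) - c j + t * a j))
    (hmin : IsLocalMin g 1) : ∑ j, a j = ∑ j, c j := by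
  have hd : HasDerivAt g (∑ j, (a j - c j)) 1 := by
    have h1 : HasDerivAt (fun t => C + ∑ j, ((if c j = 0 then 0 else
        c j * Real.log (c j / (t * a j))) - c j + t * a j)) (∑ j, (a j - c j)) 1 :=
      HasDerivAt.const_add C (HasDerivAt.fun_sum fun j _ => hasDerivAt_term (c j) (a j) (ha j))
    exact h1.congr_of_eventuallyEq (Filter.Eventually.of_forall hg)
  have h0 := hmin.hasDerivAt_eq_zero hd
  rw [Finset.sum_sub_distrib] at h0
  linarith

/-- At any local minimum `(L, R)` (with `L`, `R` entrywise strictly positive)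
of the rank-`κ` generalized KL objective `(L, R) ↦ gKL(M ‖ L R)` over pairs of
strictly positive matrices, the product `L R` has the same row sums and the
same column sums as `M`. -/
theorem gKL_local_min_preserves_sums {m n κ : ℕ}
    (M : Matrix (Fin m) (Fin n) ℝ) (hM : ∀ i j, 0 ≤ M i j) (hκ : 1 ≤ κ)
    (L : Matrix (Fin m) (Fin κ) ℝ) (R : Matrix (Fin κ) (Fin n) ℝ)
    (hL : ∀ i k, 0 < L i k) (hR : ∀ k j, 0 < R k j)
    (hmin : IsLocalMinOn
      (fun p : Matrix (Fin m) (Fin κ) ℝ × Matrix (Fin κ) (Fin n) ℝ =>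
        gKLR M (p.1 * p.2))
      {p : Matrix (Fin m) (Fin κ) ℝ × Matrix (Fin κ) (Fin n) ℝ |
        (∀ i k, 0 < p.1 i k) ∧ (∀ k j, 0 < p.2 k j)}
      (L, R)) :
    (∀ i, ∑ j, (L * R) i j = ∑ j, M i j)
    ∧ (∀ j, ∑ i, (L * R) i j = ∑ i, M i j) := by
  haveI : Nonempty (Fin κ) := ⟨⟨0, hκ⟩⟩
  have hApos : ∀ i j, 0 < (L * R) i j := fun i j => by
    rw [Matrix.mul_apply]
    exact Finset.sum_pos (fun k _ => mul_pos (hL i k) (hR k j)) Finset.univ_nonempty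
  have hmin' : ∀ᶠ p in nhdsWithin (L, R)
      {p : Matrix (Fin m) (Fin κ) ℝ × Matrix (Fin κ) (Fin n) ℝ |
        (∀ i k, 0 < p.1 i k) ∧ (∀ k j, 0 < p.2 k j)},
      gKLR M ((L * R : Matrix (Fin m) (Fin n) ℝ) : Fin m → Fin n → ℝ) ≤
        gKLR M ((p.1 * p.2 : Matrix (Fin m) (Fin n) ℝ) : Fin m → Fin n → ℝ) := hmin
  constructor
  · intro i
    set Lt : ℝ → Matrix (Fin m) (Fin κ) ℝ :=
      fun t => Matrix.of fun i' k => if i' = i then t * L i' k else L i' k with hLt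
    have hLt1 : Lt 1 = L := by
      ext i' k; simp [hLt]
    have hmul : ∀ (t : ℝ) i' j,
        (Lt t * R) i' j = if i' = i then t * (L * R) i' j else (L * R) i' j := by
      intro t i' j
      simp only [Matrix.mul_apply, hLt, Matrix.of_apply]
      split_ifs with h
      · rw [Finset.mul_sum]; exact Finset.sum_congr rfl fun k _ => by ring
      · rfl
    set g : ℝ → ℝ := fun t => gKLR M (Lt t * R) with hgdef
    have hloc : IsLocalMin g 1 := by
      have hc : Continuous fun t : ℝ => (Lt t, R) := by
        refine Continuous.prodMk ?_ continuous_const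
        refine continuous_pi fun i' => continuous_pi fun k => ?_
        simp only [hLt, Matrix.of_apply]
        split_ifs
        · exact continuous_id.mul continuous_const
        · exact continuous_const
      have htend : Filter.Tendsto (fun t => (Lt t, R))
          (nhdsWithin 1 (Set.Ioi (0:ℝ)))
          (nhdsWithin (L, R)
            {p : Matrix (Fin m) (Fin κ) ℝ × Matrix (Fin κ) (Fin n) ℝ |
              (∀ i k, 0 < p.1 i k) ∧ (∀ k j, 0 < p.2 k j)}) := by
        rw [tendsto_nhdsWithin_iff]
        constructor
        · have h1 := (hc.tendsto 1).mono_left (nhdsWithin_le_nhds (s := Set.Ioi (0:ℝ)))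
          rwa [hLt1] at h1
        · filter_upwards [self_mem_nhdsWithin] with t ht
          refine ⟨fun i' k => ?_, hR⟩
          simp only [hLt, Matrix.of_apply]
          split_ifs
          · exact mul_pos ht (hL _ _)
          · exact hL _ _
      have hev := htend.eventually hmin'
      rw [nhdsWithin_eq_nhds.mpr (Ioi_mem_nhds one_pos)] at hev
      filter_upwards [hev] with t ht
      simpa [hgdef, hLt1] using ht
    have hg : ∀ t, g t = (∑ i' ∈ Finset.univ.erase i, ∑ j,
        ((if M i' j = 0 then 0 else M i' j * Real.log (M i' j / (L * R) i' j))
          - M i' j + (L * R) i' j))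
        + ∑ j, ((if M i j = 0 then 0 else
            M i j * Real.log (M i j / (t * (L * R) i j))) - M i j + t * (L * R) i j) := by
      intro t
      simp only [hgdef, gKLR]
      rw [← Finset.add_sum_erase _ _ (Finset.mem_univ i), add_comm]
      congr 1
      · exact Finset.sum_congr rfl fun i' hi' => Finset.sum_congr rfl fun j _ => by
          rw [hmul, if_neg (Finset.ne_of_mem_erase hi')]
      · exact Finset.sum_congr rfl fun j _ => by rw [hmul, if_pos rfl]
    exact key_sums (fun j => M i j) (fun j => (L * R) i j) (fun j => hApos i j) _ g hg hloc
  · intro j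
    set Rt : ℝ → Matrix (Fin κ) (Fin n) ℝ :=
      fun t => Matrix.of fun k j' => if j' = j then t * R k j' else R k j' with hRt
    have hRt1 : Rt 1 = R := by
      ext k j'; simp [hRt]
    have hmul : ∀ (t : ℝ) i' j',
        (L * Rt t) i' j' = if j' = j then t * (L * R) i' j' else (L * R) i' j' := by
      intro t i' j'
      simp only [Matrix.mul_apply, hRt, Matrix.of_apply]
      split_ifs with h
      · rw [Finset.mul_sum]; exact Finset.sum_congr rfl fun k _ => by ring
      · rfl
    set g : ℝ → ℝ := fun t => gKLR M (L * Rt t) with hgdef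
    have hloc : IsLocalMin g 1 := by
      have hc : Continuous fun t : ℝ => (L, Rt t) := by
        refine Continuous.prodMk continuous_const ?_
        refine continuous_pi fun k => continuous_pi fun j' => ?_
        simp only [hRt, Matrix.of_apply]
        split_ifs
        · exact continuous_id.mul continuous_const
        · exact continuous_const
      have htend : Filter.Tendsto (fun t => (L, Rt t))
          (nhdsWithin 1 (Set.Ioi (0:ℝ)))
          (nhdsWithin (L, R)
            {p : Matrix (Fin m) (Fin κ) ℝ × Matrix (Fin κ) (Fin n) ℝ |
              (∀ i k, 0 < p.1 i k) ∧ (∀ k j, 0 < p.2 k j)}) := by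
        rw [tendsto_nhdsWithin_iff]
        constructor
        · have h1 := (hc.tendsto 1).mono_left (nhdsWithin_le_nhds (s := Set.Ioi (0:ℝ)))
          rwa [hRt1] at h1
        · filter_upwards [self_mem_nhdsWithin] with t ht
          refine ⟨hL, fun k j' => ?_⟩
          simp only [hRt, Matrix.of_apply]
          split_ifs
          · exact mul_pos ht (hR _ _)
          · exact hR _ _
      have hev := htend.eventually hmin'
      rw [nhdsWithin_eq_nhds.mpr (Ioi_mem_nhds one_pos)] at hev
      filter_upwards [hev] with t ht
      simpa [hgdef, hRt1] using ht
    have hg : ∀ t, g t = (∑ j' ∈ Finset.univ.erase j, ∑ i',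
        ((if M i' j' = 0 then 0 else M i' j' * Real.log (M i' j' / (L * R) i' j'))
          - M i' j' + (L * R) i' j'))
        + ∑ i', ((if M i' j = 0 then 0 else
            M i' j * Real.log (M i' j / (t * (L * R) i' j))) - M i' j + t * (L * R) i' j) := by
      intro t
      simp only [hgdef, gKLR]
      rw [Finset.sum_comm, ← Finset.add_sum_erase _ _ (Finset.mem_univ j), add_comm]
      congr 1
      · exact Finset.sum_congr rfl fun j' hj' => Finset.sum_congr rfl fun i' _ => by
          rw [hmul, if_neg (Finset.ne_of_mem_erase hj')]
      · exact Finset.sum_congr rfl fun i' _ => by rw [hmul, if_pos rfl]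
    exact key_sums (fun i' => M i' j) (fun i' => (L * R) i' j) (fun i' => hApos i' j) _ g hg hloc
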